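/- Let p ∈ (1/2, 1), b ∈ [0, 1), and m ∈ (0, 1]. Define ψ(x) = p(1−p)·(x^m − x^{b·m}) − (1−p)·((1−p)·x^m + p·x^{b·m} − 1) for x ≥ 1. Then ψ(x) ≥ 0 for all x ≥ 1 if and only if b ≤ (2p−1)/(2p). -/

import Mathlib

/-- `ψ(x) = p(1−p)(x^m − x^{bm}) − (1−p)((1−p)x^m + p·x^{bm} − 1)` is nonnegative on
`[1, ∞)` if and only if `b ≤ (2p−1)/(2p)`. -/
theorem stmt15 (p b m : ℝ) (hp : p ∈ Set.Ioo (1 / 2 : ℝ) 1) (hb : b ∈ Set.Ico (0 : ℝ) 1)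
    (hm : m ∈ Set.Ioc (0 : ℝ) 1) :
    (∀ x : ℝ, 1 ≤ x →
        0 ≤ p * (1 - p) * (x ^ m - x ^ (b * m))
              - (1 - p) * ((1 - p) * x ^ m + p * x ^ (b * m) - 1)) ↔
      b ≤ (2 * p - 1) / (2 * p) := by
  obtain ⟨hp1, hp2⟩ := hp
  obtain ⟨hb1, hb2⟩ := hb
  obtain ⟨hm1, hm2⟩ := hm
  have hp0 : (0:ℝ) < p := by linarith
  have h2p : (0:ℝ) < 2 * p := by linarith
  set c : ℝ := (2 * p - 1) / (2 * p) with hc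
  have hc0 : 0 ≤ c := div_nonneg (by linarith) h2p.le
  have hc1 : c ≤ 1 := by
    rw [hc, div_le_one h2p]; linarith
  constructor
  · -- forward: ψ ≥ 0 on [1,∞) implies b ≤ c, via right derivative at 1
    intro h
    by_contra hbc
    push_neg at hbc
    -- derivative of ψ at 1
    set f : ℝ → ℝ := fun x => p * (1 - p) * (x ^ m - x ^ (b * m))
              - (1 - p) * ((1 - p) * x ^ m + p * x ^ (b * m) - 1) with hf
    have h1 : HasDerivAt (fun x : ℝ => x ^ m) m 1 := by
      simpa using Real.hasDerivAt_rpow_const (x := (1:ℝ)) (p := m) (Or.inl one_ne_zero)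
    have h2 : HasDerivAt (fun x : ℝ => x ^ (b * m)) (b * m) 1 := by
      simpa using Real.hasDerivAt_rpow_const (x := (1:ℝ)) (p := b * m) (Or.inl one_ne_zero)
    set d : ℝ := p * (1 - p) * (m - b * m) - (1 - p) * ((1 - p) * m + p * (b * m)) with hd
    have hder : HasDerivAt f d 1 := by
      exact (((h1.sub h2).const_mul (p * (1 - p)))).sub
        ((((h1.const_mul (1 - p)).add (h2.const_mul p)).sub_const 1).const_mul (1 - p))
    have hf1 : f 1 = 0 := by simp [hf, Real.one_rpow]
    -- slope nonneg on the right, hence d ≥ 0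
    have hslope : Filter.Tendsto (slope f 1) (nhdsWithin 1 (Set.Ioi 1)) (nhds d) := by
      have := (hder.hasDerivWithinAt (s := Set.Ioi 1))
      rw [hasDerivWithinAt_iff_tendsto_slope] at this
      simpa [Set.diff_singleton_eq_self (by simp : (1:ℝ) ∉ Set.Ioi 1)] using this
    have hd0 : 0 ≤ d := by
      refine ge_of_tendsto hslope ?_
      filter_upwards [self_mem_nhdsWithin] with x hx
      have hx1 : (1:ℝ) < x := hx
      have := h x hx1.le
      rw [slope_def_field, hf1, sub_zero]
      exact div_nonneg this (by linarith)
    -- d = (1-p) m (2p - 2pb - 1) ≥ 0 forces b ≤ c, contradiction with hbc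
    have hbig : 2 * p * b > 2 * p - 1 := by
      have := (div_lt_iff₀ h2p).mp hbc
      linarith [this]
    nlinarith [hd0, mul_pos (sub_pos.mpr hp2) hm1]
  · -- reverse: b ≤ c implies ψ ≥ 0
    intro hbc x hx
    have hx0 : (0:ℝ) < x := by linarith
    set y : ℝ := x ^ m with hy
    have hy1 : (1:ℝ) ≤ y := Real.one_le_rpow hx hm1.le
    have hy0 : (0:ℝ) ≤ y := by linarith
    have hxy : x ^ (b * m) = y ^ b := by
      rw [hy, mul_comm b m, ← Real.rpow_mul hx0.le]
    have h1 : y ^ b ≤ y ^ c := Real.rpow_le_rpow_of_exponent_le hy1 hbc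
    have h2 : y ^ c ≤ c * y + (1 - c) := by
      have := Real.geom_mean_le_arith_mean2_weighted hc0 (by linarith : (0:ℝ) ≤ 1 - c)
        hy0 zero_le_one (by ring)
      simpa using this
    have h3 : y ^ b ≤ c * y + (1 - c) := h1.trans h2
    have hcy : 2 * p * c = 2 * p - 1 := by
      rw [hc]; field_simp
    -- ψ = (1-p) * ((2p-1) y - 2p y^b + 1)
    rw [hxy]
    have key : 2 * p * (y ^ b) ≤ (2 * p - 1) * y + 1 := by nlinarith [h3, hcy]
    have key2 : 0 ≤ (1 - p) * ((2 * p - 1) * y - 2 * p * (y ^ b) + 1) :=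
      mul_nonneg (by linarith) (by linarith)
    nlinarith [key2]
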